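/- arXiv:0710.0794 — 6 statements merged into one kernel-verified Lean document; each statement's English description precedes it below -/
import Mathlib

section
/- Let c > 0 and let v : ℝ → ℝ be a function in H¹_loc(ℝ) such that y ↦ e^{cy/2} v(y) and y ↦ e^{cy/2} v'(y) both belong to L²(ℝ). Then for every y₁ ∈ ℝ one has the weighted Poincaré inequality (c²/4) ∫_{y₁}^∞ e^{cy} |v(y)|² dy ≤ ∫_{y₁}^∞ e^{cy} |v'(y)|² dy. -/
open MeasureTheory Real

/-- Weighted Poincaré inequality in the space `H¹_c(ℝ)`:
if `e^{cy/2} v` and `e^{cy/2} v'` are square integrable, then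
`(c²/4) ∫_{y₁}^∞ e^{cy} v² ≤ ∫_{y₁}^∞ e^{cy} v'²`. -/
theorem weighted_poincare
    (c : ℝ) (hc : 0 < c) (v v' : ℝ → ℝ)
    (hderiv : ∀ y, HasDerivAt v (v' y) y)
    (hv : Integrable (fun y => Real.exp (c * y) * (v y) ^ 2))
    (hv' : Integrable (fun y => Real.exp (c * y) * (v' y) ^ 2))
    (y₁ : ℝ) :
    c ^ 2 / 4 * ∫ y in Set.Ioi y₁, Real.exp (c * y) * (v y) ^ 2
      ≤ ∫ y in Set.Ioi y₁, Real.exp (c * y) * (v' y) ^ 2 := by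
  set F : ℝ → ℝ := fun y => Real.exp (c * y) * (v y) ^ 2 with hFdef
  set G : ℝ → ℝ := fun y => Real.exp (c * y) * v y * v' y with hGdef
  -- measurability of v'
  have hvcont : Continuous v :=
    continuous_iff_continuousAt.mpr fun y => (hderiv y).continuousAt
  have hv'eq : v' = deriv v := funext fun y => ((hderiv y).deriv).symm
  have hv'meas : Measurable v' := hv'eq ▸ measurable_deriv v
  have hGmeas : AEStronglyMeasurable G volume := by
    exact (((Real.continuous_exp.comp (continuous_const.mul continuous_id)).mul
      hvcont).measurable.mul hv'meas).aestronglyMeasurable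
  -- G is integrable
  have hG : Integrable G := by
    refine Integrable.mono ((hv.add hv').const_mul (1/2)) hGmeas ?_
    filter_upwards with y
    have he : (0:ℝ) < Real.exp (c * y) := Real.exp_pos _
    have h1 : |v y * v' y| ≤ ((v y)^2 + (v' y)^2) / 2 := by
      rcases abs_cases (v y * v' y) with ⟨h, _⟩ | ⟨h, _⟩ <;> rw [h] <;>
        nlinarith [sq_nonneg (v y - v' y), sq_nonneg (v y + v' y)]
    have h2 : |G y| = Real.exp (c * y) * |v y * v' y| := by
      rw [hGdef]; simp only []
      rw [mul_assoc, abs_mul, abs_of_pos he]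
    have h3 : |G y| ≤ 1/2 * (Real.exp (c * y) * (v y)^2 + Real.exp (c * y) * (v' y)^2) := by
      rw [h2]; nlinarith [mul_le_mul_of_nonneg_left h1 he.le]
    calc ‖G y‖ = |G y| := rfl
      _ ≤ 1/2 * (Real.exp (c * y) * (v y)^2 + Real.exp (c * y) * (v' y)^2) := h3
      _ ≤ |1/2 * (Real.exp (c * y) * (v y)^2 + Real.exp (c * y) * (v' y)^2)| := le_abs_self _
      _ = ‖1/2 * (Real.exp (c * y) * (v y)^2 + Real.exp (c * y) * (v' y)^2)‖ := rfl
  -- derivative of F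
  set F' : ℝ → ℝ := fun y => c * F y + 2 * G y with hF'def
  have hFderiv : ∀ y, HasDerivAt F (F' y) y := by
    intro y
    have he : HasDerivAt (fun y => Real.exp (c * y)) (Real.exp (c * y) * c) y :=
      ((hasDerivAt_id y).const_mul c).exp.congr_deriv (by simp)
    have hsq : HasDerivAt (fun y => (v y) ^ 2) (2 * v y * v' y) y := by
      simpa using (hderiv y).fun_pow 2
    have := he.fun_mul hsq
    refine this.congr_deriv ?_
    simp only [hF'def, hFdef, hGdef]
    ring
  have hF' : Integrable F' := (hv.const_mul c).add (hG.const_mul 2)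
  -- FTC and limit of F at infinity
  have hFTC : ∀ b, ∫ y in y₁..b, F' y = F b - F y₁ := fun b =>
    intervalIntegral.integral_eq_sub_of_hasDerivAt (fun x _ => hFderiv x)
      (hF'.intervalIntegrable)
  have htendI : Filter.Tendsto (fun b => ∫ y in y₁..b, F' y) Filter.atTop
      (nhds (∫ y in Set.Ioi y₁, F' y)) :=
    intervalIntegral_tendsto_integral_Ioi y₁ hF'.integrableOn Filter.tendsto_id
  have htendF : Filter.Tendsto F Filter.atTop
      (nhds (F y₁ + ∫ y in Set.Ioi y₁, F' y)) := by
    have := Filter.Tendsto.const_add (F y₁) htendI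
    refine this.congr fun b => ?_
    rw [hFTC b]; ring
  set L : ℝ := F y₁ + ∫ y in Set.Ioi y₁, F' y with hLdef
  have hFnonneg : ∀ y, 0 ≤ F y := fun y => by positivity
  have hL0 : 0 ≤ L := ge_of_tendsto htendF (Filter.Eventually.of_forall hFnonneg)
  have hLle : L ≤ 0 := by
    by_contra h
    push_neg at h
    have hev : ∀ᶠ b in Filter.atTop, L/2 < F b :=
      htendF.eventually_const_lt (by linarith)
    rcases Filter.eventually_atTop.mp hev with ⟨a, ha⟩
    have hconst : Integrable (fun _ : ℝ => L/2) (volume.restrict (Set.Ioi a)) := by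
      refine Integrable.mono hv.integrableOn aestronglyMeasurable_const ?_
      rw [ae_restrict_iff' measurableSet_Ioi]
      filter_upwards with y hy
      have := ha y hy.le
      rw [Real.norm_eq_abs, Real.norm_eq_abs, abs_of_pos (by linarith : (0:ℝ) < L/2),
        abs_of_nonneg (hFnonneg y)]
      linarith
    rw [integrable_const_iff] at hconst
    rcases hconst with h' | h'
    · have : L/2 > 0 := by linarith
      simp [this.ne'] at h'
    · have h'' : (volume.restrict (Set.Ioi a)) Set.univ < ⊤ := measure_lt_top _ _
      simp [Measure.restrict_apply_univ, Real.volume_Ioi] at h''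
  have hLzero : L = 0 := le_antisymm hLle hL0
  -- split the integral of F'
  have hsplit : ∫ y in Set.Ioi y₁, F' y
      = c * (∫ y in Set.Ioi y₁, F y) + 2 * (∫ y in Set.Ioi y₁, G y) := by
    rw [show (fun y => F' y) = (fun y => c * F y + 2 * G y) from rfl]
    rw [integral_add ((hv.const_mul c).integrableOn) ((hG.const_mul 2).integrableOn),
      integral_const_mul, integral_const_mul]
  set A : ℝ := ∫ y in Set.Ioi y₁, F y with hAdef
  set B : ℝ := ∫ y in Set.Ioi y₁, Real.exp (c * y) * (v' y) ^ 2 with hBdef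
  set IG : ℝ := ∫ y in Set.Ioi y₁, G y with hIGdef
  have hmain : c * A + 2 * IG ≤ 0 := by
    have : c * A + 2 * IG = -F y₁ := by
      have := hLzero
      rw [hLdef, hsplit] at this
      linarith
    rw [this]
    linarith [hFnonneg y₁]
  -- pointwise AM-GM bound
  have hpt : (fun y => (-2) * G y) ≤ fun y => c/2 * F y + 2/c * (Real.exp (c * y) * (v' y)^2) := by
    intro y
    have key : ∀ a b : ℝ, -2 * (a * b) ≤ c/2 * a^2 + 2/c * b^2 := by
      intro a b
      rw [show c/2 * a^2 + 2/c * b^2 = (c^2 * a^2 + 4 * b^2) / (2*c) by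
        field_simp; ring]
      rw [le_div_iff₀ (by positivity)]
      nlinarith [sq_nonneg (c * a + 2 * b)]
    have e2 : Real.exp (c * y) = Real.exp (c * y / 2) ^ 2 := by
      rw [sq, ← Real.exp_add]; ring_nf
    have := key (Real.exp (c * y / 2) * v y) (Real.exp (c * y / 2) * v' y)
    simp only [hGdef, hFdef]
    convert this using 1 <;> rw [e2] <;> ring
  have hint : ∫ y in Set.Ioi y₁, (-2) * G y
      ≤ ∫ y in Set.Ioi y₁, (c/2 * F y + 2/c * (Real.exp (c * y) * (v' y)^2)) :=
    integral_mono ((hG.const_mul (-2)).integrableOn)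
      (((hv.const_mul (c/2)).add (hv'.const_mul (2/c))).integrableOn) hpt
  have hleft : ∫ y in Set.Ioi y₁, (-2) * G y = -2 * IG := by
    rw [integral_const_mul]
  have hright : ∫ y in Set.Ioi y₁, (c/2 * F y + 2/c * (Real.exp (c * y) * (v' y)^2))
      = c/2 * A + 2/c * B := by
    rw [integral_add ((hv.const_mul (c/2)).integrableOn) ((hv'.const_mul (2/c)).integrableOn),
      integral_const_mul, integral_const_mul]
  rw [hleft, hright] at hint
  -- conclude
  have h1 : c/2 * A ≤ 2/c * B := by linarith
  have h2 : c/2 * (c/2 * A) ≤ c/2 * (2/c * B) :=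
    mul_le_mul_of_nonneg_left h1 (by positivity)
  have h3 : c/2 * (2/c * B) = B := by field_simp
  calc c ^ 2 / 4 * A = c/2 * (c/2 * A) := by ring
    _ ≤ c/2 * (2/c * B) := h2
    _ = B := h3
end

section
/- Let c > 0 and let v ∈ H¹_loc(ℝ) with e^{cy/2} v ∈ L²(ℝ) and e^{cy/2} v' ∈ L²(ℝ). Then for every y₁ ∈ ℝ one has the pointwise bound c · e^{c y₁} |v(y₁)|² ≤ ∫_{y₁}^∞ e^{cy} |v'(y)|² dy. -/
open MeasureTheory Real Filter

/-- Weighted trace inequality in the space `H¹_c(ℝ)`: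
`c e^{cy₁} |v(y₁)|² ≤ ∫_{y₁}^∞ e^{cy} |v'(y)|² dy`. -/
theorem weighted_trace_inequality
    (c : ℝ) (hc : 0 < c) (v v' : ℝ → ℝ)
    (hderiv : ∀ y, HasDerivAt v (v' y) y)
    (hv : Integrable (fun y => Real.exp (c * y) * (v y) ^ 2))
    (hv' : Integrable (fun y => Real.exp (c * y) * (v' y) ^ 2))
    (y₁ : ℝ) :
    c * Real.exp (c * y₁) * (v y₁) ^ 2
      ≤ ∫ y in Set.Ioi y₁, Real.exp (c * y) * (v' y) ^ 2 := by
  set g : ℝ → ℝ := fun y => Real.exp (c * y) * v y ^ 2 with hg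
  set h : ℝ → ℝ := fun y =>
    c * Real.exp (c * y) * v y ^ 2 + Real.exp (c * y) * (2 * v y * v' y) with hh
  have hvcont : Continuous v :=
    continuous_iff_continuousAt.2 fun y => (hderiv y).continuousAt
  have hv'meas : Measurable v' := by
    have hdv : deriv v = v' := funext fun y => (hderiv y).deriv
    rw [← hdv]; exact measurable_deriv v
  have hgderiv : ∀ y, HasDerivAt g (h y) y := by
    intro y
    have h1 : HasDerivAt (fun y => Real.exp (c * y)) (c * Real.exp (c * y)) y := by
      simpa [mul_comm, Function.comp_def] using (Real.hasDerivAt_exp (c * y)).comp y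
        ((hasDerivAt_id y).const_mul c)
    have h2 : HasDerivAt (fun y => v y ^ 2) (2 * v y * v' y) y := by
      simpa using (hderiv y).fun_pow 2
    exact h1.mul h2
  have hp : Integrable (fun y => Real.exp (c * y) * (2 * v y * v' y)) := by
    refine (hv.add hv').mono' ?_ ?_
    · exact ((Real.continuous_exp.comp (continuous_const.mul continuous_id)).aestronglyMeasurable.mul
        (((continuous_const.mul hvcont).aestronglyMeasurable).mul
          hv'meas.aestronglyMeasurable))
    · refine Filter.Eventually.of_forall fun y => ?_
      have he : (0:ℝ) < Real.exp (c * y) := Real.exp_pos _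
      have habs : |2 * v y * v' y| ≤ v y ^ 2 + v' y ^ 2 :=
        abs_le.2 ⟨by nlinarith [sq_nonneg (v y + v' y)], by nlinarith [sq_nonneg (v y - v' y)]⟩
      rw [Real.norm_eq_abs, abs_mul, abs_of_pos he]
      calc Real.exp (c * y) * |2 * v y * v' y|
          ≤ Real.exp (c * y) * (v y ^ 2 + v' y ^ 2) :=
            mul_le_mul_of_nonneg_left habs he.le
        _ = Real.exp (c * y) * v y ^ 2 + Real.exp (c * y) * v' y ^ 2 := by ring
  have hhint : Integrable h := by
    have := (hv.const_mul c).add hp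
    exact this.congr (Filter.Eventually.of_forall fun y => by simp only [hh, Pi.add_apply]; ring)
  have hFTC : ∀ b, ∫ y in y₁..b, h y = g b - g y₁ := fun b =>
    intervalIntegral.integral_eq_sub_of_hasDerivAt (fun y _ => hgderiv y)
      hhint.intervalIntegrable
  have hT : Tendsto (fun b => ∫ y in y₁..b, h y) atTop
      (nhds (∫ y in Set.Ioi y₁, h y)) :=
    intervalIntegral_tendsto_integral_Ioi y₁ hhint.integrableOn tendsto_id
  set L : ℝ := (∫ y in Set.Ioi y₁, h y) + g y₁ with hL
  have hgL : Tendsto g atTop (nhds L) := by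
    have : ∀ b, g b = (∫ y in y₁..b, h y) + g y₁ := fun b => by
      rw [hFTC b]; ring
    simpa [← this] using hT.add_const (g y₁)
  have hgnonneg : ∀ y, 0 ≤ g y := fun y =>
    mul_nonneg (Real.exp_pos _).le (sq_nonneg _)
  have hLzero : L = 0 := by
    by_contra hne
    have hLpos : 0 < L :=
      lt_of_le_of_ne (ge_of_tendsto' hgL hgnonneg) (Ne.symm hne)
    have hev : ∀ᶠ y in atTop, L / 2 < g y :=
      hgL.eventually (eventually_gt_nhds (by linarith))
    obtain ⟨M, hM⟩ := hev.exists_forall_of_atTop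
    have hconst : Integrable (fun _ : ℝ => L / 2) (volume.restrict (Set.Ici M)) := by
      refine (hv.restrict (s := Set.Ici M)).mono' aestronglyMeasurable_const ?_
      refine (ae_restrict_iff' measurableSet_Ici).2 (Filter.Eventually.of_forall fun y hy => ?_)
      have := hM y hy
      rw [Real.norm_eq_abs, abs_of_pos (by linarith)]
      simpa [hg] using this.le
    rw [integrable_const_iff] at hconst
    rcases hconst with h0 | hfin
    · exact absurd h0 (by positivity)
    · simp [isFiniteMeasure_iff, Real.volume_Ici] at hfin
  have hgy₁ : g y₁ = -∫ y in Set.Ioi y₁, h y := by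
    have := hLzero
    rw [hL] at this
    linarith
  have hkey : c * g y₁ ≤ ∫ y in Set.Ioi y₁, Real.exp (c * y) * (v' y) ^ 2 := by
    rw [hgy₁, mul_neg, ← integral_const_mul, ← MeasureTheory.integral_neg]
    refine setIntegral_mono_on (((hhint.const_mul c).neg).integrableOn)
      hv'.integrableOn measurableSet_Ioi fun y _ => ?_
    have he : (0:ℝ) < Real.exp (c * y) := Real.exp_pos _
    have hsq : 0 ≤ Real.exp (c * y) * (c * v y + v' y) ^ 2 :=
      mul_nonneg he.le (sq_nonneg _)
    simp only [hh]
    nlinarith [hsq]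
  calc c * Real.exp (c * y₁) * (v y₁) ^ 2 = c * g y₁ := by rw [hg]; ring
    _ ≤ _ := hkey
end

section
/- Let α > 0, c > 0, m > 0, and set μ_α = (1/(2α))(−1 + Re √(1 − 4αm)) (the principal square root, so μ_α = (−1 + √(1−4αm))/(2α) if 4αm ≤ 1 and μ_α = −1/(2α) otherwise), which is negative. Suppose z ∈ ℂ satisfies Re(z) > μ_α, and define γ = (c/2)(1 + 2αz) and δ = m + z(1 + αz). Then Re √(γ² + δ) > Re(γ) > 0, where √ denotes the principal branch of the complex square root. -/
open Complex Real

/-- The real part of the principal square root is nonnegative. -/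
lemma re_cpow_half_nonneg (w : ℂ) : 0 ≤ (w ^ (1/2 : ℂ)).re := by
  rcases eq_or_ne w 0 with h | h
  · simp [h, Complex.zero_cpow (by norm_num : (1/2:ℂ) ≠ 0)]
  · rw [Complex.cpow_def_of_ne_zero h, Complex.exp_re]
    apply mul_nonneg (Real.exp_nonneg _)
    have him : (Complex.log w * (1/2)).im = w.arg / 2 := by
      simp [Complex.mul_im, Complex.log_im]; ring
    rw [him]
    exact Real.cos_nonneg_of_mem_Icc ⟨by linarith [Complex.neg_pi_lt_arg w],
      by linarith [Complex.arg_le_pi w]⟩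

/-- The principal square root squares to the original number. -/
lemma sq_cpow_half (w : ℂ) : (w ^ (1/2 : ℂ)) ^ 2 = w := by
  rw [show (1/2:ℂ) = ((2:ℕ):ℂ)⁻¹ by norm_num]
  exact Complex.cpow_nat_inv_pow w two_ne_zero

/-- Lemma on the essential spectrum: if `Re z > μ_α` then
`Re √(γ²+δ) > Re γ > 0`, where `√` is the principal complex square root,
`γ = (c/2)(1+2αz)` and `δ = m + z(1+αz)`. -/
theorem re_sqrt_gt_re_gamma
    (α c m : ℝ) (hα : 0 < α) (hc : 0 < c) (hm : 0 < m)
    (μα : ℝ)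
    (hμα : μα = if 4 * α * m ≤ 1 then (-1 + Real.sqrt (1 - 4 * α * m)) / (2 * α)
                else -1 / (2 * α))
    (z : ℂ) (hz : μα < z.re)
    (γ δ : ℂ)
    (hγ : γ = (c / 2 : ℂ) * (1 + 2 * (α : ℂ) * z))
    (hδ : δ = (m : ℂ) + z * (1 + (α : ℂ) * z)) :
    γ.re < ((γ ^ 2 + δ) ^ (1/2 : ℂ)).re ∧ 0 < γ.re := by
  set x := z.re with hx
  set y := z.im with hy
  rw [hμα] at hz
  clear hμα
  have h2α : (0:ℝ) < 2 * α := by positivity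
  -- positivity of the quadratic αx² + x + m and of s = 1 + 2αx
  have hq : 0 < m + x + α * x ^ 2 := by
    split_ifs at hz with h
    · rw [div_lt_iff₀ h2α] at hz
      have ht : Real.sqrt (1 - 4*α*m) ^ 2 = 1 - 4*α*m :=
        Real.sq_sqrt (by linarith)
      have ht0 : 0 ≤ Real.sqrt (1 - 4*α*m) := Real.sqrt_nonneg _
      nlinarith [hz, ht, ht0]
    · push_neg at h
      nlinarith [sq_nonneg (2*α*x + 1)]
  have hs : 0 < 1 + 2 * α * x := by
    split_ifs at hz with h
    · rw [div_lt_iff₀ h2α] at hz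
      have ht0 : 0 ≤ Real.sqrt (1 - 4*α*m) := Real.sqrt_nonneg _
      linarith
    · rw [div_lt_iff₀ h2α] at hz; linarith
  -- real and imaginary parts of γ
  have hγre : γ.re = c/2 * (1 + 2*α*x) := by
    rw [hγ]
    simp [Complex.mul_re, Complex.mul_im, Complex.add_re, Complex.add_im]
    try ring
    exact Or.inl (Or.inl hx.symm)
  have hγim : γ.im = c * α * y := by
    rw [hγ]
    simp [Complex.mul_re, Complex.mul_im, Complex.add_re, Complex.add_im]
    try ring
  have hgpos : 0 < γ.re := by rw [hγre]; positivity
  refine ⟨?_, hgpos⟩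
  set w := γ ^ 2 + δ with hw
  have hwre : w.re = γ.re^2 - γ.im^2 + (m + x + α*(x^2 - y^2)) := by
    rw [hw, hδ]
    simp [pow_two, Complex.mul_re, Complex.mul_im, Complex.add_re, Complex.add_im]
    try ring
  have hwim : w.im = 2*γ.re*γ.im + y*(1 + 2*α*x) := by
    rw [hw, hδ]
    simp [pow_two, Complex.mul_re, Complex.mul_im, Complex.add_re, Complex.add_im]
    rw [hγre, hγim]
    try ring
  set K : ℝ := γ.re^2 + γ.im^2 - (m + x + α*(x^2 - y^2)) with hK
  -- key algebraic identity and inequality : normSq w > K²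
  have hid : Complex.normSq w - K^2
      = (1 + 2*α*x)^2 * (c^2*(m + x + α*x^2) + (c^2*α + 1)*y^2) := by
    rw [Complex.normSq_apply, hwre, hwim, hK, hγre, hγim]; ring
  have hbr : 0 < c^2*(m + x + α*x^2) + (c^2*α + 1)*y^2 := by
    nlinarith [mul_pos (pow_pos hc 2) hq,
      mul_nonneg (by positivity : (0:ℝ) ≤ c^2*α + 1) (sq_nonneg y)]
  have hkey : K^2 < Complex.normSq w := by
    nlinarith [mul_pos (pow_pos hs 2) hbr]
  -- square root r
  set r : ℂ := w ^ (1/2 : ℂ) with hr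
  have hr2 : r ^ 2 = w := sq_cpow_half w
  have hr0 : 0 ≤ r.re := re_cpow_half_nonneg w
  -- relations between r and w
  have hre : r.re^2 - r.im^2 = w.re := by
    rw [← hr2]; simp [pow_two, Complex.mul_re]; try ring
  have hns : (r.re^2 + r.im^2)^2 = Complex.normSq w := by
    rw [← hr2, map_pow, Complex.normSq_apply]; ring
  -- from hkey: r.re² + r.im² > K
  have hS0 : 0 ≤ r.re^2 + r.im^2 := by positivity
  have h1 : K < r.re^2 + r.im^2 := by
    by_contra hcon
    push_neg at hcon
    have hle : (r.re^2 + r.im^2)^2 ≤ K^2 := pow_le_pow_left₀ hS0 hcon 2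
    rw [hns] at hle
    linarith [hkey]
  -- hence 2 r.re² > 2 γ.re²
  have h2 : γ.re^2 < r.re^2 := by
    have hKw : 2*γ.re^2 = K + w.re := by rw [hK, hwre]; ring
    linarith [h1, hre, hKw]
  by_contra hcon
  push_neg at hcon
  exact absurd (pow_le_pow_left₀ hr0 hcon 2) (not_le.mpr h2)
end

section
/- Let g : ℝ → ℝ be continuous, let α > 0, c > 0, λ ∈ ℝ, and set γ = (c/2)(1 + 2αλ). If u : ℝ → ℝ is twice continuously differentiable and satisfies u''(y) + c(1+2αλ) u'(y) − g(y) u(y) = λ(1+αλ) u(y) for all y ∈ ℝ, then the function U(y) = e^{γ y} u(y) satisfies U''(y) − (g(y) + c²/4) U(y) = λ(1+αλ)(1+αc²) U(y) for all y ∈ ℝ. -/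
open Real

/-- The substitution `U(y) = e^{γy} u(y)`, `γ = (c/2)(1+2αλ)`, transforms the
quadratic eigenvalue equation `u'' + c(1+2αλ)u' − g u = λ(1+αλ)u` into the
self-adjoint form `U'' − (g + c²/4)U = λ(1+αλ)(1+αc²)U`. -/
theorem selfadjoint_transformation
    (g : ℝ → ℝ) (hg : Continuous g)
    (α c lam : ℝ) (hα : 0 < α) (hc : 0 < c)
    (γ : ℝ) (hγ : γ = c / 2 * (1 + 2 * α * lam))
    (u : ℝ → ℝ) (hu : ContDiff ℝ 2 u)
    (heq : ∀ y, deriv (deriv u) y + c * (1 + 2 * α * lam) * deriv u y - g y * u y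
      = lam * (1 + α * lam) * u y) :
    ∀ y, deriv (deriv (fun x => Real.exp (γ * x) * u x)) y
        - (g y + c ^ 2 / 4) * (Real.exp (γ * y) * u y)
      = lam * (1 + α * lam) * (1 + α * c ^ 2) * (Real.exp (γ * y) * u y) := by
  have hu1 : Differentiable ℝ u := hu.differentiable (by norm_num)
  have hu2 : Differentiable ℝ (deriv u) := by
    have h2 : ContDiff ℝ ((1 : ℕ∞) + 1) u := by exact_mod_cast hu
    rw [contDiff_succ_iff_deriv] at h2
    exact h2.2.2.differentiable (by norm_num)
  have hexp : ∀ x : ℝ, HasDerivAt (fun x => Real.exp (γ * x)) (γ * Real.exp (γ * x)) x := by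
    intro x
    have h1 : HasDerivAt (fun x : ℝ => γ * x) γ x := by
      simpa using (hasDerivAt_id x).const_mul γ
    simpa [mul_comm, Function.comp_def] using (Real.hasDerivAt_exp (γ * x)).comp x h1
  have hd1 : deriv (fun x => Real.exp (γ * x) * u x)
      = fun x => γ * Real.exp (γ * x) * u x + Real.exp (γ * x) * deriv u x := by
    funext x
    exact ((hexp x).mul (hu1 x).hasDerivAt).deriv
  intro y
  have hd2 : deriv (deriv (fun x => Real.exp (γ * x) * u x)) y
      = γ * (γ * Real.exp (γ * y) * u y + Real.exp (γ * y) * deriv u y)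
        + (γ * Real.exp (γ * y) * deriv u y + Real.exp (γ * y) * deriv (deriv u) y) := by
    rw [hd1]
    have h1 : HasDerivAt (fun x => γ * Real.exp (γ * x) * u x)
        (γ * (γ * Real.exp (γ * y) * u y + Real.exp (γ * y) * deriv u y)) y := by
      have := (((hexp y).mul (hu1 y).hasDerivAt)).const_mul γ
      simpa [mul_assoc, mul_add] using this
    have h2 : HasDerivAt (fun x => Real.exp (γ * x) * deriv u x)
        (γ * Real.exp (γ * y) * deriv u y + Real.exp (γ * y) * deriv (deriv u) y) y :=
      (hexp y).mul (hu2 y).hasDerivAt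
    exact (h1.add h2).deriv
  rw [hd2]
  have h := heq y
  subst hγ
  linear_combination Real.exp (c / 2 * (1 + 2 * α * lam) * y) * h
end

section
/- Let α > 0 and s ∈ ℝ, set γ = αs² − 1, and define V' : ℝ → ℝ by V'(u) = −u(1−u)(s + γ(1−2u)). Let h(x) = (1 + eˣ)⁻¹. Then u(x,t) = h(x − st) satisfies α ∂ₜₜu + ∂ₜu = ∂ₓₓu − V'(u) for all (x,t) ∈ ℝ². Moreover, if s > 1/√α (so γ > 0), then the derivative of V' at u = 0 equals −(s+γ) < 0 whenever s + γ > 0, i.e., V''(0) < 0. -/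
open Real

noncomputable def Hfun (x : ℝ) : ℝ := (1 + Real.exp x)⁻¹
noncomputable def Hfun1 (x : ℝ) : ℝ := -(Hfun x * (1 - Hfun x))
noncomputable def Hfun2 (x : ℝ) : ℝ := Hfun x * (1 - Hfun x) * (1 - 2 * Hfun x)

lemma hasDerivAt_Hfun (x : ℝ) : HasDerivAt Hfun (Hfun1 x) x := by
  have hne : (1 + Real.exp x) ≠ 0 := by positivity
  have h1 : HasDerivAt (fun y => 1 + Real.exp y) (Real.exp x) x :=
    (Real.hasDerivAt_exp x).const_add 1
  have h2 := h1.inv hne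
  refine h2.congr_deriv ?_
  simp only [Hfun1, Hfun]
  field_simp
  ring

lemma hasDerivAt_Hfun1 (x : ℝ) : HasDerivAt Hfun1 (Hfun2 x) x := by
  have hH := hasDerivAt_Hfun x
  have h2 := ((hH.mul (hH.const_sub 1))).neg
  refine h2.congr_deriv ?_
  simp only [Hfun2, Hfun1]
  ring

/-- Explicit supersonic front example: with `γ = αs²−1`,
`V'(u) = −u(1−u)(s+γ(1−2u))` and `h(x) = (1+eˣ)⁻¹`, the function
`u(x,t) = h(x−st)` solves the damped wave equation; moreover
`(V')'(0) = −(s+γ)`, which is negative when `s > 1/√α`. -/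
theorem supersonic_front_example
    (α s : ℝ) (hα : 0 < α)
    (γ : ℝ) (hγ : γ = α * s ^ 2 - 1)
    (Vp : ℝ → ℝ) (hVp : ∀ u, Vp u = -(u * (1 - u) * (s + γ * (1 - 2 * u))))
    (h : ℝ → ℝ) (hh : ∀ x, h x = (1 + Real.exp x)⁻¹)
    (u : ℝ → ℝ → ℝ) (hu : ∀ x t, u x t = h (x - s * t)) :
    (∀ x t,
      α * deriv (deriv (fun τ => u x τ)) t + deriv (fun τ => u x τ) t
        = deriv (deriv (fun ξ => u ξ t)) x - Vp (u x t)) ∧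
    deriv Vp 0 = -(s + γ) ∧
    (1 / Real.sqrt α < s → 0 < s + γ → deriv Vp 0 < 0) := by
  have hH : h = Hfun := funext fun x => (hh x).trans rfl
  subst hH
  have hU : u = fun x t => Hfun (x - s * t) := by
    funext x t; exact hu x t
  subst hU
  have hdVp : deriv Vp 0 = -(s + γ) := by
    have hVpf : Vp = fun v : ℝ => -(v * (1 - v) * (s + γ * (1 - 2 * v))) := funext hVp
    subst hVpf
    have D := ((((hasDerivAt_id (0:ℝ)).mul ((hasDerivAt_id (0:ℝ)).const_sub 1)).mul
      (((((hasDerivAt_id (0:ℝ)).const_mul 2).const_sub 1).const_mul γ).const_add s))).neg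
    have D' : HasDerivAt (fun v : ℝ => -(v * (1 - v) * (s + γ * (1 - 2 * v)))) (-(s + γ)) 0 := by
      refine D.congr_deriv ?_
      norm_num
    exact D'.deriv
  refine ⟨?_, hdVp, fun _ hpos => by rw [hdVp]; linarith⟩
  intro x t
  have innerT : ∀ τ : ℝ, HasDerivAt (fun τ : ℝ => x - s * τ) (-s) τ := by
    intro τ
    simpa using ((hasDerivAt_id τ).const_mul s).const_sub x
  have innerX : ∀ ξ : ℝ, HasDerivAt (fun ξ : ℝ => ξ - s * t) 1 ξ := fun ξ =>
    (hasDerivAt_id ξ).sub_const _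
  have d1 : ∀ τ : ℝ, HasDerivAt (fun τ => Hfun (x - s * τ)) (Hfun1 (x - s * τ) * (-s)) τ :=
    fun τ => (hasDerivAt_Hfun (x - s * τ)).comp (h₂ := Hfun) τ (innerT τ)
  have e1 : deriv (fun τ => Hfun (x - s * τ)) = fun τ => Hfun1 (x - s * τ) * (-s) :=
    funext fun τ => (d1 τ).deriv
  have d2 : HasDerivAt (fun τ => Hfun1 (x - s * τ) * (-s)) (Hfun2 (x - s * t) * (-s) * (-s)) t :=
    ((hasDerivAt_Hfun1 (x - s * t)).comp t (innerT t)).mul_const (-s)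
  have dx1 : ∀ ξ : ℝ, HasDerivAt (fun ξ => Hfun (ξ - s * t)) (Hfun1 (ξ - s * t)) ξ := by
    intro ξ
    simpa [Function.comp_def] using (hasDerivAt_Hfun (ξ - s * t)).comp ξ (innerX ξ)
  have ex1 : deriv (fun ξ => Hfun (ξ - s * t)) = fun ξ => Hfun1 (ξ - s * t) :=
    funext fun ξ => (dx1 ξ).deriv
  have dx2 : HasDerivAt (fun ξ => Hfun1 (ξ - s * t)) (Hfun2 (x - s * t)) x := by
    simpa [Function.comp_def] using (hasDerivAt_Hfun1 (x - s * t)).comp x (innerX x)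
  have goal1 : deriv (deriv (fun τ => Hfun (x - s * τ))) t = Hfun2 (x - s * t) * (-s) * (-s) := by
    rw [e1]; exact d2.deriv
  have goal2 : deriv (deriv (fun ξ => Hfun (ξ - s * t))) x = Hfun2 (x - s * t) := by
    rw [ex1]; exact dx2.deriv
  simp only []
  rw [goal1, goal2, (d1 t).deriv, hVp]
  simp only [Hfun1, Hfun2]
  subst hγ
  ring
end

section
/- Let c > 0, ε₀ > 0, ȳ ∈ ℝ, and let V : ℝ → ℝ be continuous and bounded below with V(u) ≥ 0 whenever |u| ≤ ε₀. Let v ∈ H¹_loc(ℝ) with e^{cy/2}v ∈ L²(ℝ), e^{cy/2}v' ∈ L²(ℝ), and suppose |v(y)| ≤ ε₀ for all y ≥ ȳ and |v(ȳ)| = ε₀. Then for every y₀ ∈ ℝ, ∫_ℝ e^{c(y−y₀)} ( (1/2)|v'(y)|² + V(v(y)) ) dy ≥ e^{c(ȳ−y₀)} ( (min V)/c + c ε₀²/2 ). -/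
open MeasureTheory Real
open Set Filter

section Aux

lemma aux_exp_int_Iic {c : ℝ} (hc : 0 < c) (a : ℝ) :
    IntegrableOn (fun y => Real.exp (c * y)) (Set.Iic a) := by
  have h1 : Integrable ((Set.Iic (c * a)).indicator Real.exp) :=
    (integrableOn_exp_Iic (c * a)).integrable_indicator measurableSet_Iic
  have h2 := (integrable_comp_mul_left_iff ((Set.Iic (c * a)).indicator Real.exp) hc.ne').2 h1
  have h3 : (fun y => ((Set.Iic (c * a)).indicator Real.exp) (c * y))
      = (Set.Iic a).indicator (fun y => Real.exp (c * y)) := by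
    funext y
    by_cases h : y ≤ a
    · have hm1 : c * y ∈ Set.Iic (c * a) := Set.mem_Iic.2 (mul_le_mul_of_nonneg_left h hc.le)
      have hm2 : y ∈ Set.Iic a := Set.mem_Iic.2 h
      rw [Set.indicator_of_mem hm1, Set.indicator_of_mem hm2]
    · have hm1 : c * y ∉ Set.Iic (c * a) := by
        simpa using fun hh => h (le_of_mul_le_mul_left hh hc)
      have hm2 : y ∉ Set.Iic a := by simpa using h
      rw [Set.indicator_of_notMem hm1, Set.indicator_of_notMem hm2]
  rw [h3] at h2
  exact (integrable_indicator_iff measurableSet_Iic).1 h2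

lemma aux_exp_integral_Iic {c : ℝ} (hc : 0 < c) (a : ℝ) :
    ∫ y in Set.Iic a, Real.exp (c * y) = Real.exp (c * a) / c := by
  have hderiv : ∀ y ∈ Set.Iic a, HasDerivAt (fun z => Real.exp (c * z) / c) (Real.exp (c * y)) y := by
    intro y _
    have h : HasDerivAt (fun z => Real.exp (c * z)) (Real.exp (c * y) * c) y :=
      HasDerivAt.exp (by simpa using (hasDerivAt_id y).const_mul c)
    have := h.div_const c
    simpa [mul_div_assoc, mul_div_cancel_right₀, hc.ne'] using this
  have htend : Tendsto (fun z => Real.exp (c * z) / c) atBot (nhds 0) := by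
    have h1 : Tendsto (fun z : ℝ => c * z) atBot atBot := by
      exact (tendsto_const_mul_atBot_of_pos hc).2 tendsto_id
    have := (Real.tendsto_exp_atBot.comp h1).div_const c
    simpa using this
  have := integral_Iic_of_hasDerivAt_of_tendsto' hderiv (aux_exp_int_Iic hc a) htend
  rw [this]; ring


lemma aux_trace (c ε₀ ybar : ℝ) (hc : 0 < c) (v v' : ℝ → ℝ)
    (hderiv : ∀ y, HasDerivAt v (v' y) y)
    (hv : Integrable (fun y => Real.exp (c * y) * (v y) ^ 2))
    (hv' : Integrable (fun y => Real.exp (c * y) * (v' y) ^ 2))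
    (hbar : |v ybar| = ε₀) :
    c * Real.exp (c * ybar) * ε₀ ^ 2 ≤ ∫ y in Set.Ioi ybar, Real.exp (c * y) * (v' y) ^ 2 := by
  set g : ℝ → ℝ := fun y => Real.exp (c * y) * (v y) ^ 2 with hg
  set G' : ℝ → ℝ := fun y => c * Real.exp (c * y) * (v y) ^ 2
      + Real.exp (c * y) * (2 * v y * v' y) with hG'
  -- continuity / measurability
  have hvcont : Continuous v := by
    rw [continuous_iff_continuousAt]; exact fun y => (hderiv y).continuousAt
  have hv'meas : Measurable v' := by
    have : v' = deriv v := funext fun y => ((hderiv y).deriv).symm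
    rw [this]; exact measurable_deriv v
  have hexpc : ∀ y : ℝ, HasDerivAt (fun z => Real.exp (c * z)) (c * Real.exp (c * y)) y := by
    intro y
    have h : HasDerivAt (fun z => Real.exp (c * z)) (Real.exp (c * y) * c) y :=
      HasDerivAt.exp (by simpa using (hasDerivAt_id y).const_mul c)
    simpa [mul_comm] using h
  have hgderiv : ∀ y, HasDerivAt g (G' y) y := by
    intro y
    have hsq : HasDerivAt (fun z => (v z) ^ 2) (2 * v y * v' y) y := by
      have h := (hderiv y).fun_pow 2
      refine h.congr_deriv ?_
      push_cast
      ring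
    exact (hexpc y).mul hsq
  -- integrability of G'
  have hcross : Integrable (fun y => Real.exp (c * y) * (2 * v y * v' y)) := by
    apply Integrable.mono' (hv.add hv')
    · exact (((Real.continuous_exp.comp (continuous_const.mul continuous_id)).measurable).mul
        ((measurable_const.mul hvcont.measurable).mul hv'meas)).aestronglyMeasurable
    · refine ae_of_all _ fun y => ?_
      rw [Real.norm_eq_abs, abs_mul, abs_of_pos (Real.exp_pos _)]
      have h1 : |2 * v y * v' y| ≤ (v y) ^ 2 + (v' y) ^ 2 := by
        rw [abs_le]
        constructor <;> nlinarith [sq_nonneg (v y + v' y), sq_nonneg (v y - v' y)]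
      calc Real.exp (c * y) * |2 * v y * v' y|
          ≤ Real.exp (c * y) * ((v y) ^ 2 + (v' y) ^ 2) :=
            mul_le_mul_of_nonneg_left h1 (Real.exp_pos _).le
        _ = Real.exp (c * y) * (v y) ^ 2 + Real.exp (c * y) * (v' y) ^ 2 := by ring
  have hG'int : Integrable G' := by
    have h1 : Integrable (fun y => c * (Real.exp (c * y) * (v y) ^ 2)) := hv.const_mul c
    have := h1.add hcross
    simpa [hG', mul_assoc, Pi.add_def] using this
  set I : ℝ := ∫ y in Set.Ioi ybar, Real.exp (c * y) * (v' y) ^ 2 with hI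
  have hInonneg : 0 ≤ I :=
    setIntegral_nonneg measurableSet_Ioi fun y _ =>
      mul_nonneg (Real.exp_pos _).le (sq_nonneg _)
  -- key bound : for all R ≥ ybar, g ybar - I / c ≤ g R
  have hkey : ∀ R, ybar ≤ R → g ybar - I / c ≤ g R := by
    intro R hR
    have hftc : ∫ y in ybar..R, G' y = g R - g ybar :=
      intervalIntegral.integral_eq_sub_of_hasDerivAt (fun y _ => hgderiv y)
        hG'int.intervalIntegrable
    have hlow : ∀ y, -(1 / c) * (Real.exp (c * y) * (v' y) ^ 2) ≤ G' y := by
      intro y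
      have he := (Real.exp_pos (c * y)).le
      have h := mul_nonneg he (sq_nonneg (c * v y + v' y))
      simp only [hG']
      rw [show -(1 / c) * (Real.exp (c * y) * v' y ^ 2)
          = -(Real.exp (c * y) * v' y ^ 2) / c from by ring, div_le_iff₀ hc]
      nlinarith [h]
    have hmono : ∫ y in ybar..R, -(1 / c) * (Real.exp (c * y) * (v' y) ^ 2)
        ≤ ∫ y in ybar..R, G' y := by
      apply intervalIntegral.integral_mono_on hR
      · exact (hv'.const_mul (-(1/c))).intervalIntegrable
      · exact hG'int.intervalIntegrable
      · exact fun y _ => hlow y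
    have hsub : ∫ y in ybar..R, Real.exp (c * y) * (v' y) ^ 2 ≤ I := by
      rw [intervalIntegral.integral_of_le hR]
      apply setIntegral_mono_set hv'.integrableOn
      · exact ae_of_all _ fun y => mul_nonneg (Real.exp_pos _).le (sq_nonneg _)
      · exact (Set.Ioc_subset_Ioi_self).eventuallyLE
    have h1 : -(1 / c) * I ≤ ∫ y in ybar..R, -(1 / c) * (Real.exp (c * y) * (v' y) ^ 2) := by
      rw [intervalIntegral.integral_const_mul]
      have : 0 ≤ 1 / c := by positivity
      nlinarith [hsub]
    have := le_trans h1 (le_trans hmono (le_of_eq hftc))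
    have hcc : -(1/c) * I = -(I / c) := by ring
    linarith [hcc ▸ this]
  -- conclude by contradiction
  by_contra hcon
  push_neg at hcon
  have hgybar : g ybar = Real.exp (c * ybar) * ε₀ ^ 2 := by
    simp only [hg]
    rw [← sq_abs (v ybar), hbar]
  set δ := g ybar - I / c with hδ
  have hδpos : 0 < δ := by
    rw [hδ, hgybar]
    have h2 : I / c < Real.exp (c * ybar) * ε₀ ^ 2 := by
      rw [div_lt_iff₀ hc]; nlinarith [hcon]
    linarith
  have hconst : IntegrableOn (fun _ : ℝ => δ) (Set.Ioi ybar) := by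
    apply Integrable.mono hv.integrableOn aestronglyMeasurable_const
    filter_upwards [ae_restrict_mem measurableSet_Ioi] with y hy
    rw [Real.norm_eq_abs, Real.norm_eq_abs, abs_of_pos hδpos,
      abs_of_nonneg (mul_nonneg (Real.exp_pos _).le (sq_nonneg _))]
    exact hkey y (le_of_lt hy)
  have := ((integrableOn_const_iff (C := δ)).1 hconst)
  rcases this with h | h
  · exact hδpos.ne' (by simpa using h)
  · rw [Real.volume_Ioi] at h; exact absurd h (by simp)

end Aux

/-- Lower bound on the energy at the invasion point: if `V ≥ 0` on `[−ε₀,ε₀]`,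
`|v| ≤ ε₀` on `[ȳ,∞)` and `|v(ȳ)| = ε₀`, then
`∫ e^{c(y−y₀)} (½ v'² + V(v)) dy ≥ e^{c(ȳ−y₀)} ((inf V)/c + c ε₀²/2)`. -/
theorem energy_lower_bound_at_invasion_point
    (c ε₀ ybar : ℝ) (hc : 0 < c) (hε₀ : 0 < ε₀)
    (V : ℝ → ℝ) (hVcont : Continuous V) (hVbdd : BddBelow (Set.range V))
    (hVpos : ∀ u : ℝ, |u| ≤ ε₀ → 0 ≤ V u)
    (v v' : ℝ → ℝ)
    (hderiv : ∀ y, HasDerivAt v (v' y) y)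
    (hv : Integrable (fun y => Real.exp (c * y) * (v y) ^ 2))
    (hv' : Integrable (fun y => Real.exp (c * y) * (v' y) ^ 2))
    (hVint : Integrable (fun y => Real.exp (c * y) * V (v y)))
    (hsmall : ∀ y ≥ ybar, |v y| ≤ ε₀)
    (hbar : |v ybar| = ε₀) :
    ∀ y₀ : ℝ,
      Real.exp (c * (ybar - y₀)) * (sInf (Set.range V) / c + c * ε₀ ^ 2 / 2)
        ≤ ∫ y, Real.exp (c * (y - y₀)) * ((1/2) * (v' y) ^ 2 + V (v y)) := by
  intro y₀
  set m : ℝ := sInf (Set.range V) with hm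
  have hmle : ∀ u, m ≤ V u := fun u => csInf_le hVbdd ⟨u, rfl⟩
  -- core inequality without the y₀ shift
  have hcore : Real.exp (c * ybar) * (m / c + c * ε₀ ^ 2 / 2)
      ≤ ∫ y, Real.exp (c * y) * ((1/2) * (v' y) ^ 2 + V (v y)) := by
    have hsplit : (fun y => Real.exp (c * y) * ((1/2) * (v' y) ^ 2 + V (v y)))
        = fun y => (1/2) * (Real.exp (c * y) * (v' y) ^ 2) + Real.exp (c * y) * V (v y) := by
      funext y; ring
    rw [hsplit, integral_add (hv'.const_mul (1/2)) hVint, integral_const_mul]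
    -- derivative part
    have hA : c * Real.exp (c * ybar) * ε₀ ^ 2
        ≤ ∫ y, Real.exp (c * y) * (v' y) ^ 2 := by
      refine le_trans (aux_trace c ε₀ ybar hc v v' hderiv hv hv' hbar) ?_
      exact setIntegral_le_integral hv'
        (ae_of_all _ fun y => mul_nonneg (Real.exp_pos _).le (sq_nonneg _))
    -- potential part
    have hB : Real.exp (c * ybar) * m / c ≤ ∫ y, Real.exp (c * y) * V (v y) := by
      rw [← intervalIntegral.integral_Iic_add_Ioi (b := ybar) hVint.integrableOn hVint.integrableOn]
      have h1 : Real.exp (c * ybar) * m / c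
          ≤ ∫ y in Set.Iic ybar, Real.exp (c * y) * V (v y) := by
        have hmul : ∫ y in Set.Iic ybar, m * Real.exp (c * y)
            = Real.exp (c * ybar) * m / c := by
          rw [integral_const_mul, aux_exp_integral_Iic hc]; ring
        rw [← hmul]
        apply setIntegral_mono_on ((aux_exp_int_Iic hc ybar).const_mul m)
          hVint.integrableOn measurableSet_Iic
        intro y _
        have := hmle (v y)
        nlinarith [Real.exp_pos (c * y)]
      have h2 : (0:ℝ) ≤ ∫ y in Set.Ioi ybar, Real.exp (c * y) * V (v y) := by
        apply setIntegral_nonneg measurableSet_Ioi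
        intro y hy
        exact mul_nonneg (Real.exp_pos _).le (hVpos _ (hsmall y (le_of_lt hy)))
      linarith
    have h3 : Real.exp (c * ybar) * (m / c + c * ε₀ ^ 2 / 2)
        = Real.exp (c * ybar) * m / c + (c * Real.exp (c * ybar) * ε₀ ^ 2) / 2 := by
      ring
    linarith
  -- shift by y₀
  have hshift : (fun y => Real.exp (c * (y - y₀)) * ((1/2) * (v' y) ^ 2 + V (v y)))
      = fun y => Real.exp (-(c * y₀)) * (Real.exp (c * y) * ((1/2) * (v' y) ^ 2 + V (v y))) := by
    funext y
    rw [← mul_assoc, ← Real.exp_add]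
    ring_nf
  rw [hshift, integral_const_mul]
  have hexp1 : Real.exp (c * (ybar - y₀)) = Real.exp (-(c * y₀)) * Real.exp (c * ybar) := by
    rw [← Real.exp_add]; ring_nf
  rw [hexp1, mul_assoc]
  exact mul_le_mul_of_nonneg_left hcore (Real.exp_pos _).le
end
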